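/- arXiv:1907.09566 — 3 statements merged into one kernel-verified Lean document; each statement's English description precedes it below -/
import Mathlib

section
/- For every y = (y₁, …, yₙ) ∈ ℝ^{3n}, the Euclidean distance from y to the singular set Σ satisfies dist(y, Σ) = min{ |yᵢ − R_j|, (1/√2)|y_k − y_l| : 1 ≤ i ≤ n, 1 ≤ j ≤ m, 1 ≤ k < l ≤ n }, provided the index set is nonempty (i.e. m ≥ 1 or n ≥ 2). -/
/-- The `i`-th ℝ³-component of a point of `ℝ^{3n} ≅ (ℝ³)ⁿ`, realized as
`EuclideanSpace ℝ (Fin n × Fin 3)` with the Euclidean norm. -/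
noncomputable def comp3 {n : ℕ} (x : EuclideanSpace ℝ (Fin n × Fin 3)) (i : Fin n) :
    EuclideanSpace ℝ (Fin 3) := WithLp.toLp 2 (fun a => x (i, a))


lemma le_of_sq_le_sq'' {a b : ℝ} (hb : 0 ≤ b) (h : a ^ 2 ≤ b ^ 2) : a ≤ b := by nlinarith

lemma eq_of_sq_eq_sq'' {a b : ℝ} (ha : 0 ≤ a) (hb : 0 ≤ b) (h : a ^ 2 = b ^ 2) : a = b := by
  nlinarith

lemma le_infDist' {X : Type*} [MetricSpace X] {s : Set X} {x : X} {b : ℝ}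
    (hs : s.Nonempty) (hb : ∀ z ∈ s, b ≤ dist x z) : b ≤ Metric.infDist x s := by
  by_contra h
  push_neg at h
  obtain ⟨z, hz, hlt⟩ := (Metric.infDist_lt_iff hs).1 h
  exact ((hb z hz).trans_lt hlt).false

lemma dist_sq_decomp {n : ℕ} (y x : EuclideanSpace ℝ (Fin n × Fin 3)) :
    dist y x ^ 2 = ∑ i : Fin n, dist (comp3 y i) (comp3 x i) ^ 2 := by
  have h2 : ∀ i : Fin n, dist (comp3 y i) (comp3 x i) ^ 2
      = ∑ a : Fin 3, dist (y (i, a)) (x (i, a)) ^ 2 := by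
    intro i
    rw [EuclideanSpace.dist_eq, Real.sq_sqrt (by positivity)]
    rfl
  rw [EuclideanSpace.dist_eq, Real.sq_sqrt (by positivity), Fintype.sum_prod_type]
  simp [h2]

lemma comp3_dist_le {n : ℕ} (y x : EuclideanSpace ℝ (Fin n × Fin 3)) (i : Fin n) :
    dist (comp3 y i) (comp3 x i) ≤ dist y x := by
  refine le_of_sq_le_sq'' dist_nonneg ?_
  rw [dist_sq_decomp]
  exact Finset.single_le_sum (f := fun i => dist (comp3 y i) (comp3 x i) ^ 2)
    (fun _ _ => by positivity) (Finset.mem_univ i)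

/-- Replace the components of `y` in `s` by `c`. -/
noncomputable def patch3 {n : ℕ} (y : EuclideanSpace ℝ (Fin n × Fin 3)) (s : Set (Fin n))
    [DecidablePred (· ∈ s)] (c : EuclideanSpace ℝ (Fin 3)) :
    EuclideanSpace ℝ (Fin n × Fin 3) := WithLp.toLp 2 (fun p => if p.1 ∈ s then c p.2 else y p)

lemma comp3_patch3 {n : ℕ} (y : EuclideanSpace ℝ (Fin n × Fin 3)) (s : Set (Fin n))
    [DecidablePred (· ∈ s)] (c : EuclideanSpace ℝ (Fin 3)) (i : Fin n) :
    comp3 (patch3 y s c) i = if i ∈ s then c else comp3 y i := by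
  by_cases h : i ∈ s <;> ext a <;> simp [comp3, patch3, h]

open Metric in
lemma infDist_comp_eq {n : ℕ} (y : EuclideanSpace ℝ (Fin n × Fin 3)) (i : Fin n)
    (c : EuclideanSpace ℝ (Fin 3)) :
    infDist y {x : EuclideanSpace ℝ (Fin n × Fin 3) | comp3 x i = c}
      = ‖comp3 y i - c‖ := by
  classical
  set z := patch3 y {i} c with hz
  have hzc : ∀ i', comp3 z i' = if i' ∈ ({i} : Set (Fin n)) then c else comp3 y i' :=
    comp3_patch3 y {i} c
  have hzmem : z ∈ {x : EuclideanSpace ℝ (Fin n × Fin 3) | comp3 x i = c} := by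
    simp [Set.mem_setOf_eq, hzc]
  have hdistz : dist y z = dist (comp3 y i) c := by
    refine eq_of_sq_eq_sq'' dist_nonneg dist_nonneg ?_
    rw [dist_sq_decomp]
    rw [Finset.sum_eq_single_of_mem i (Finset.mem_univ i)]
    · rw [hzc]; simp
    · intro b _ hb
      rw [hzc]; simp [hb]
  apply le_antisymm
  · rw [← dist_eq_norm, ← hdistz]
    exact infDist_le_dist_of_mem hzmem
  · refine le_infDist' ⟨z, hzmem⟩ ?_
    intro x hx
    rw [dist_eq_norm, ← hx]
    exact le_trans (le_of_eq (dist_eq_norm _ _).symm) (comp3_dist_le y x i)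

lemma pair_lower {n : ℕ} (y x : EuclideanSpace ℝ (Fin n × Fin 3)) {k l : Fin n} (hkl : k ≠ l)
    (hx : comp3 x k = comp3 x l) :
    dist (comp3 y k) (comp3 y l) / Real.sqrt 2 ≤ dist y x := by
  have h2 : dist (comp3 y k) (comp3 x k) ^ 2 + dist (comp3 y l) (comp3 x l) ^ 2
      ≤ dist y x ^ 2 := by
    rw [dist_sq_decomp]
    have hsplit := Finset.add_sum_erase Finset.univ
      (fun i => dist (comp3 y i) (comp3 x i) ^ 2) (Finset.mem_univ k)
    calc dist (comp3 y k) (comp3 x k) ^ 2 + dist (comp3 y l) (comp3 x l) ^ 2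
        ≤ dist (comp3 y k) (comp3 x k) ^ 2
          + ∑ i ∈ Finset.univ.erase k, dist (comp3 y i) (comp3 x i) ^ 2 := by
          gcongr
          exact Finset.single_le_sum (f := fun i => dist (comp3 y i) (comp3 x i) ^ 2)
            (fun _ _ => by positivity) (Finset.mem_erase.2 ⟨hkl.symm, Finset.mem_univ l⟩)
      _ = _ := hsplit
  have htri : dist (comp3 y k) (comp3 y l)
      ≤ dist (comp3 y k) (comp3 x k) + dist (comp3 y l) (comp3 x l) := by
    calc dist (comp3 y k) (comp3 y l)
        ≤ dist (comp3 y k) (comp3 x k) + dist (comp3 x k) (comp3 y l) := dist_triangle _ _ _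
      _ = dist (comp3 y k) (comp3 x k) + dist (comp3 y l) (comp3 x l) := by
          congr 1
          rw [hx, dist_comm]
  refine le_of_sq_le_sq'' dist_nonneg ?_
  have hs2 : Real.sqrt 2 ^ 2 = 2 := Real.sq_sqrt (by norm_num)
  rw [div_pow, hs2]
  have ha : (0:ℝ) ≤ dist (comp3 y k) (comp3 x k) := dist_nonneg
  have hb : (0:ℝ) ≤ dist (comp3 y l) (comp3 x l) := dist_nonneg
  nlinarith [sq_nonneg (dist (comp3 y k) (comp3 x k) - dist (comp3 y l) (comp3 x l)),
    dist_nonneg (x := comp3 y k) (y := comp3 y l)]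

open Metric in
lemma infDist_pair_eq {n : ℕ} (y : EuclideanSpace ℝ (Fin n × Fin 3)) {k l : Fin n} (hkl : k ≠ l) :
    infDist y {x : EuclideanSpace ℝ (Fin n × Fin 3) | comp3 x k = comp3 x l}
      = ‖comp3 y k - comp3 y l‖ / Real.sqrt 2 := by
  classical
  set c : EuclideanSpace ℝ (Fin 3) := midpoint ℝ (comp3 y k) (comp3 y l) with hc
  set z := patch3 y {k, l} c with hz
  have hzc : ∀ i', comp3 z i' = if i' ∈ ({k, l} : Set (Fin n)) then c else comp3 y i' :=
    comp3_patch3 y {k, l} c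
  have hzmem : z ∈ {x : EuclideanSpace ℝ (Fin n × Fin 3) | comp3 x k = comp3 x l} := by
    simp [Set.mem_setOf_eq, hzc]
  have hdistz : dist y z = dist (comp3 y k) (comp3 y l) / Real.sqrt 2 := by
    refine eq_of_sq_eq_sq'' dist_nonneg (by positivity) ?_
    rw [dist_sq_decomp]
    have hsum : ∀ i : Fin n, dist (comp3 y i) (comp3 z i) ^ 2
        = (if i = k then dist (comp3 y k) c ^ 2 else 0)
          + (if i = l then dist (comp3 y l) c ^ 2 else 0) := by
      intro i
      rcases eq_or_ne i k with rfl | hik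
      · simp [hzc, hkl]
      rcases eq_or_ne i l with rfl | hil
      · simp [hzc, hkl.symm, hik]
      · simp [hzc, hik, hil]
    rw [Finset.sum_congr rfl (fun i _ => hsum i), Finset.sum_add_distrib]
    simp only [Finset.sum_ite_eq', Finset.mem_univ, if_true]
    have hk2 : dist (comp3 y k) c = dist (comp3 y k) (comp3 y l) / 2 := by
      rw [hc, dist_left_midpoint]
      norm_num
      ring
    have hl2 : dist (comp3 y l) c = dist (comp3 y k) (comp3 y l) / 2 := by
      rw [hc, midpoint_comm, dist_left_midpoint, dist_comm]
      norm_num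
      ring
    rw [hk2, hl2, div_pow, div_pow, Real.sq_sqrt (by norm_num : (0:ℝ) ≤ 2)]
    ring
  apply le_antisymm
  · rw [← dist_eq_norm, ← hdistz]
    exact infDist_le_dist_of_mem hzmem
  · refine le_infDist' ⟨z, hzmem⟩ ?_
    intro x hx
    rw [dist_eq_norm, ← dist_eq_norm]
    exact pair_lower y x hkl hx

/-- The singular set `Σ` of the Coulomb potential of a molecule with `n` electrons and
`m` nuclei located at `R 1, …, R m ∈ ℝ³`. -/
def singularSet (n m : ℕ) (R : Fin m → EuclideanSpace ℝ (Fin 3)) :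
    Set (EuclideanSpace ℝ (Fin n × Fin 3)) :=
  {x | (∃ i j, comp3 x i = R j) ∨ ∃ k l, k < l ∧ comp3 x k = comp3 x l}

/-- Provided the index set is nonempty (`m ≥ 1` or `n ≥ 2`), the Euclidean distance from
`y ∈ ℝ^{3n}` to the singular set `Σ` is the minimum of the numbers `‖yᵢ - R_j‖`
(`1 ≤ i ≤ n`, `1 ≤ j ≤ m`) and `‖y_k - y_l‖/√2` (`1 ≤ k < l ≤ n`). -/
theorem infDist_to_singularSet (n m : ℕ) (hn : 1 ≤ n)
    (R : Fin m → EuclideanSpace ℝ (Fin 3)) (hnm : 1 ≤ m ∨ 2 ≤ n)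
    (y : EuclideanSpace ℝ (Fin n × Fin 3)) :
    Metric.infDist y (singularSet n m R) =
      sInf ({d : ℝ | ∃ i j, d = ‖comp3 y i - R j‖} ∪
        {d : ℝ | ∃ k l, k < l ∧ d = ‖comp3 y k - comp3 y l‖ / Real.sqrt 2}) := by
  classical
  set S : Set ℝ := ({d : ℝ | ∃ i j, d = ‖comp3 y i - R j‖} ∪
      {d : ℝ | ∃ k l, k < l ∧ d = ‖comp3 y k - comp3 y l‖ / Real.sqrt 2}) with hSdef
  -- finiteness of S
  have hSfin : S.Finite := by
    have h1 : {d : ℝ | ∃ i j, d = ‖comp3 y i - R j‖}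
        ⊆ Set.range (fun p : Fin n × Fin m => ‖comp3 y p.1 - R p.2‖) := by
      rintro d ⟨i, j, rfl⟩; exact ⟨(i, j), rfl⟩
    have h2 : {d : ℝ | ∃ k l, k < l ∧ d = ‖comp3 y k - comp3 y l‖ / Real.sqrt 2}
        ⊆ Set.range (fun p : Fin n × Fin n => ‖comp3 y p.1 - comp3 y p.2‖ / Real.sqrt 2) := by
      rintro d ⟨k, l, _, rfl⟩; exact ⟨(k, l), rfl⟩
    exact ((Set.finite_range _).subset h1).union ((Set.finite_range _).subset h2)
  -- nonemptiness of S and of the singular set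
  have hSne : S.Nonempty := by
    rcases hnm with hm | hn2
    · exact ⟨‖comp3 y ⟨0, hn⟩ - R ⟨0, hm⟩‖, Or.inl ⟨⟨0, hn⟩, ⟨0, hm⟩, rfl⟩⟩
    · refine ⟨‖comp3 y ⟨0, by omega⟩ - comp3 y ⟨1, hn2⟩‖ / Real.sqrt 2,
        Or.inr ⟨⟨0, by omega⟩, ⟨1, hn2⟩, by simp [Fin.lt_def], rfl⟩⟩
  have hbdd : BddBelow S := hSfin.bddBelow
  -- nonempty pieces
  have hAne : ∀ (i : Fin n) (j : Fin m),
      ({x : EuclideanSpace ℝ (Fin n × Fin 3) | comp3 x i = R j}).Nonempty := by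
    intro i j
    refine ⟨patch3 y Set.univ (R j), ?_⟩
    simp [Set.mem_setOf_eq, comp3_patch3]
  have hBne : ∀ (k l : Fin n),
      ({x : EuclideanSpace ℝ (Fin n × Fin 3) | comp3 x k = comp3 x l}).Nonempty := by
    intro k l
    refine ⟨patch3 y Set.univ 0, ?_⟩
    simp [Set.mem_setOf_eq, comp3_patch3]
  have hsingne : (singularSet n m R).Nonempty := by
    rcases hnm with hm | hn2
    · obtain ⟨x, hx⟩ := hAne ⟨0, hn⟩ ⟨0, hm⟩
      exact ⟨x, Or.inl ⟨_, _, hx⟩⟩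
    · obtain ⟨x, hx⟩ := hBne ⟨0, by omega⟩ ⟨1, hn2⟩
      exact ⟨x, Or.inr ⟨⟨0, by omega⟩, ⟨1, hn2⟩, by simp [Fin.lt_def], hx⟩⟩
  apply le_antisymm
  · -- infDist ≤ sInf S
    obtain hmem := hSne.csInf_mem hSfin
    rcases hmem with ⟨i, j, hd⟩ | ⟨k, l, hkl, hd⟩
    · calc Metric.infDist y (singularSet n m R)
          ≤ Metric.infDist y {x | comp3 x i = R j} :=
            Metric.infDist_le_infDist_of_subset
              (fun x hx => Or.inl ⟨i, j, hx⟩) (hAne i j)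
        _ = ‖comp3 y i - R j‖ := infDist_comp_eq y i (R j)
        _ = sInf S := hd.symm
    · calc Metric.infDist y (singularSet n m R)
          ≤ Metric.infDist y {x | comp3 x k = comp3 x l} :=
            Metric.infDist_le_infDist_of_subset
              (fun x hx => Or.inr ⟨k, l, hkl, hx⟩) (hBne k l)
        _ = ‖comp3 y k - comp3 y l‖ / Real.sqrt 2 := infDist_pair_eq y (ne_of_lt hkl)
        _ = sInf S := hd.symm
  · refine le_infDist' hsingne ?_
    intro x hx
    rcases hx with ⟨i, j, hij⟩ | ⟨k, l, hkl, hklx⟩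
    · calc sInf S ≤ ‖comp3 y i - R j‖ := csInf_le hbdd (Or.inl ⟨i, j, rfl⟩)
        _ = dist (comp3 y i) (comp3 x i) := by rw [hij, dist_eq_norm]
        _ ≤ dist y x := comp3_dist_le y x i
    · calc sInf S ≤ ‖comp3 y k - comp3 y l‖ / Real.sqrt 2 :=
            csInf_le hbdd (Or.inr ⟨k, l, hkl, rfl⟩)
        _ = dist (comp3 y k) (comp3 y l) / Real.sqrt 2 := by rw [dist_eq_norm]
        _ ≤ dist y x := pair_lower y x (ne_of_lt hkl) hklx
end

section
/- For every q > 0 and every y = (y₁, …, yₙ) ∈ ℝ^{3n} with y ∉ Σ, one has dist(y, Σ)^{−q} ≤ Σ_{j=1}^{m} Σ_{i=1}^{n} |yᵢ − R_j|^{−q} + Σ_{1 ≤ k < l ≤ n} ((1/√2)|y_k − y_l|)^{−q}. -/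
open scoped Real
set_option maxHeartbeats 1000000

lemma comp3_sub (n : ℕ) (y z : EuclideanSpace ℝ (Fin n × Fin 3)) (i : Fin n) (a : Fin 3) :
    (comp3 y i - comp3 z i) a = (y - z) (i, a) := rfl

lemma isClosed_singularSet (n m : ℕ) (R : Fin m → EuclideanSpace ℝ (Fin 3)) :
    IsClosed (singularSet n m R) := by
  have h1 : ∀ (i : Fin n) (j : Fin m),
      IsClosed {x : EuclideanSpace ℝ (Fin n × Fin 3) | comp3 x i = R j} := by
    intro i j
    have : {x : EuclideanSpace ℝ (Fin n × Fin 3) | comp3 x i = R j}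
        = ⋂ a : Fin 3, {x | EuclideanSpace.proj (i, a) x = R j a} := by
      ext x
      simp only [Set.mem_setOf_eq, Set.mem_iInter, funext_iff, PiLp.proj_apply]
      exact ⟨fun h a => congrArg (fun v : EuclideanSpace ℝ (Fin 3) => v a) h, fun h => by ext a; exact h a⟩
    rw [this]
    exact isClosed_iInter fun a =>
      isClosed_eq (EuclideanSpace.proj (i, a)).continuous continuous_const
  have h2 : ∀ (k l : Fin n),
      IsClosed {x : EuclideanSpace ℝ (Fin n × Fin 3) | comp3 x k = comp3 x l} := by
    intro k l
    have : {x : EuclideanSpace ℝ (Fin n × Fin 3) | comp3 x k = comp3 x l}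
        = ⋂ a : Fin 3, {x | EuclideanSpace.proj (k, a) x = EuclideanSpace.proj (l, a) x} := by
      ext x
      simp only [Set.mem_setOf_eq, Set.mem_iInter, funext_iff, PiLp.proj_apply]
      exact ⟨fun h a => congrArg (fun v : EuclideanSpace ℝ (Fin 3) => v a) h, fun h => by ext a; exact h a⟩
    rw [this]
    exact isClosed_iInter fun a =>
      isClosed_eq (EuclideanSpace.proj (k, a)).continuous (EuclideanSpace.proj (l, a)).continuous
  have : singularSet n m R =
      (⋃ i, ⋃ j, {x : EuclideanSpace ℝ (Fin n × Fin 3) | comp3 x i = R j}) ∪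
      ⋃ k, ⋃ l, ⋃ _ : k < l, {x : EuclideanSpace ℝ (Fin n × Fin 3) | comp3 x k = comp3 x l} := by
    ext x
    simp [singularSet]
  rw [this]
  exact ((isClosed_iUnion_of_finite fun i => isClosed_iUnion_of_finite fun j => h1 i j).union
    (isClosed_iUnion_of_finite fun k => isClosed_iUnion_of_finite fun l =>
      isClosed_iUnion_of_finite fun _ => h2 k l))

lemma sq_comp3_le (n : ℕ) (y z : EuclideanSpace ℝ (Fin n × Fin 3)) (i : Fin n) :
    ‖comp3 y i - comp3 z i‖ ^ 2 ≤ ‖y - z‖ ^ 2 := by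
  rw [EuclideanSpace.norm_eq, EuclideanSpace.norm_eq,
    Real.sq_sqrt (by positivity), Real.sq_sqrt (by positivity)]
  rw [Fintype.sum_prod_type]
  calc ∑ a : Fin 3, ‖(comp3 y i - comp3 z i) a‖ ^ 2
      = ∑ a : Fin 3, ‖(y - z) (i, a)‖ ^ 2 := by
        simp only [comp3_sub]
    _ ≤ ∑ i' : Fin n, ∑ a : Fin 3, ‖(y - z) (i', a)‖ ^ 2 :=
        Finset.single_le_sum (f := fun i' => ∑ a : Fin 3, ‖(y - z) (i', a)‖ ^ 2)
          (fun _ _ => by positivity) (Finset.mem_univ i)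

lemma sq_comp3_pair_le (n : ℕ) (y z : EuclideanSpace ℝ (Fin n × Fin 3)) (k l : Fin n)
    (hkl : k ≠ l) :
    ‖comp3 y k - comp3 z k‖ ^ 2 + ‖comp3 y l - comp3 z l‖ ^ 2 ≤ ‖y - z‖ ^ 2 := by
  rw [EuclideanSpace.norm_eq (x := comp3 y k - comp3 z k),
    EuclideanSpace.norm_eq (x := comp3 y l - comp3 z l), EuclideanSpace.norm_eq,
    Real.sq_sqrt (by positivity), Real.sq_sqrt (by positivity), Real.sq_sqrt (by positivity)]
  rw [Fintype.sum_prod_type]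
  simp only [comp3_sub]
  have := Finset.add_sum_erase Finset.univ
    (fun i' => ∑ a : Fin 3, ‖(y - z) (i', a)‖ ^ 2) (Finset.mem_univ k)
  calc (∑ a : Fin 3, ‖(y - z) (k, a)‖ ^ 2) + ∑ a : Fin 3, ‖(y - z) (l, a)‖ ^ 2
      ≤ (∑ a : Fin 3, ‖(y - z) (k, a)‖ ^ 2) +
        ∑ i' ∈ Finset.univ.erase k, ∑ a : Fin 3, ‖(y - z) (i', a)‖ ^ 2 := by
        gcongr
        exact Finset.single_le_sum (f := fun i' => ∑ a : Fin 3, ‖(y - z) (i', a)‖ ^ 2)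
          (fun _ _ => by positivity) (Finset.mem_erase.2 ⟨hkl.symm, Finset.mem_univ l⟩)
    _ = ∑ i' : Fin n, ∑ a : Fin 3, ‖(y - z) (i', a)‖ ^ 2 := this

/-- For every `q > 0` and every `y ∉ Σ` one has
`dist(y,Σ)^{-q} ≤ ∑_{j,i} ‖yᵢ - R_j‖^{-q} + ∑_{k<l} ((1/√2)‖y_k - y_l‖)^{-q}`. -/
theorem infDist_singularSet_rpow_neg_le (n m : ℕ) (hn : 1 ≤ n)
    (R : Fin m → EuclideanSpace ℝ (Fin 3)) (q : ℝ) (hq : 0 < q)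
    (y : EuclideanSpace ℝ (Fin n × Fin 3)) (hy : y ∉ singularSet n m R) :
    Metric.infDist y (singularSet n m R) ^ (-q) ≤
      (∑ j : Fin m, ∑ i : Fin n, ‖comp3 y i - R j‖ ^ (-q)) +
        ∑ p ∈ Finset.univ.filter (fun p : Fin n × Fin n => p.1 < p.2),
          ((1 / Real.sqrt 2) * ‖comp3 y p.1 - comp3 y p.2‖) ^ (-q) := by
  have hsum1 : (0:ℝ) ≤ ∑ j : Fin m, ∑ i : Fin n, ‖comp3 y i - R j‖ ^ (-q) := by positivity
  have hsum2 : (0:ℝ) ≤ ∑ p ∈ Finset.univ.filter (fun p : Fin n × Fin n => p.1 < p.2),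
      ((1 / Real.sqrt 2) * ‖comp3 y p.1 - comp3 y p.2‖) ^ (-q) := by positivity
  rcases Set.eq_empty_or_nonempty (singularSet n m R) with hS | hS
  · rw [hS, Metric.infDist_empty, Real.zero_rpow (by linarith)]
    linarith
  obtain ⟨z, hzS, hzd⟩ := (isClosed_singularSet n m R).exists_infDist_eq_dist hS y
  rw [hzd]
  have hdist : dist y z = ‖y - z‖ := dist_eq_norm y z
  rcases hzS with ⟨i, j, hij⟩ | ⟨k, l, hkl, hkleq⟩
  · -- nuclear case
    have h2 : ‖comp3 y i - R j‖ ^ (-q) ≤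
        ∑ j' : Fin m, ∑ i' : Fin n, ‖comp3 y i' - R j'‖ ^ (-q) := by
      have s1 : ‖comp3 y i - R j‖ ^ (-q) ≤ ∑ i' : Fin n, ‖comp3 y i' - R j‖ ^ (-q) := by
        apply Finset.single_le_sum (f := fun i' => ‖comp3 y i' - R j‖ ^ (-q)) (a := i)
        · intro i' _
          positivity
        · exact Finset.mem_univ i
      have s2 : ∑ i' : Fin n, ‖comp3 y i' - R j‖ ^ (-q) ≤
          ∑ j' : Fin m, ∑ i' : Fin n, ‖comp3 y i' - R j'‖ ^ (-q) := by
        apply Finset.single_le_sum (f := fun j' => ∑ i' : Fin n, ‖comp3 y i' - R j'‖ ^ (-q))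
          (a := j)
        · intro j' _
          positivity
        · exact Finset.mem_univ j
      linarith
    have h1 : ‖comp3 y i - R j‖ ≤ dist y z := by
      rw [hdist, ← hij]
      have := sq_comp3_le n y z i
      nlinarith [norm_nonneg (comp3 y i - comp3 z i), norm_nonneg (y - z)]
    have h0 : 0 < ‖comp3 y i - R j‖ := by
      rw [norm_pos_iff, sub_ne_zero]
      intro h
      exact hy (Or.inl ⟨i, j, h⟩)
    have hterm : dist y z ^ (-q) ≤ ‖comp3 y i - R j‖ ^ (-q) :=
      Real.rpow_le_rpow_of_nonpos h0 h1 (by linarith)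
    linarith
  · -- electron-electron case
    have hs2 : (0:ℝ) < Real.sqrt 2 := Real.sqrt_pos.2 (by norm_num)
    have h1 : (1 / Real.sqrt 2) * ‖comp3 y k - comp3 y l‖ ≤ dist y z := by
      rw [hdist]
      have hsq := sq_comp3_pair_le n y z k l hkl.ne
      have htri : ‖comp3 y k - comp3 y l‖ ≤
          ‖comp3 y k - comp3 z k‖ + ‖comp3 y l - comp3 z l‖ := by
        have : comp3 y k - comp3 y l =
            (comp3 y k - comp3 z k) - (comp3 y l - comp3 z l) := by
          rw [hkleq]; abel
        rw [this]
        exact norm_sub_le _ _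
      have h2' : Real.sqrt 2 ^ 2 = 2 := Real.sq_sqrt (by norm_num)
      rw [div_mul_eq_mul_div, one_mul, div_le_iff₀ hs2]
      have key : ‖comp3 y k - comp3 y l‖ ^ 2 ≤ (‖y - z‖ * Real.sqrt 2) ^ 2 := by
        rw [mul_pow, h2']
        nlinarith [sq_nonneg (‖comp3 y k - comp3 z k‖ - ‖comp3 y l - comp3 z l‖),
          norm_nonneg (comp3 y k - comp3 y l), norm_nonneg (comp3 y k - comp3 z k),
          norm_nonneg (comp3 y l - comp3 z l)]
      have hkey := Real.sqrt_le_sqrt key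
      rwa [Real.sqrt_sq (norm_nonneg _), Real.sqrt_sq (by positivity)] at hkey
    have h0 : 0 < (1 / Real.sqrt 2) * ‖comp3 y k - comp3 y l‖ := by
      apply mul_pos (by positivity)
      rw [norm_pos_iff, sub_ne_zero]
      intro h
      exact hy (Or.inr ⟨k, l, hkl, h⟩)
    have hterm : dist y z ^ (-q) ≤ ((1 / Real.sqrt 2) * ‖comp3 y k - comp3 y l‖) ^ (-q) :=
      Real.rpow_le_rpow_of_nonpos h0 h1 (by linarith)
    have h2 : ((1 / Real.sqrt 2) * ‖comp3 y k - comp3 y l‖) ^ (-q) ≤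
        ∑ p ∈ Finset.univ.filter (fun p : Fin n × Fin n => p.1 < p.2),
          ((1 / Real.sqrt 2) * ‖comp3 y p.1 - comp3 y p.2‖) ^ (-q)  := by
      apply Finset.single_le_sum
        (f := fun p : Fin n × Fin n => ((1 / Real.sqrt 2) * ‖comp3 y p.1 - comp3 y p.2‖) ^ (-q))
        (a := (k, l))
      · intro p _
        positivity
      · simp [hkl]
    linarith
end

section
/- Let N ∈ ℕ, let Σ ⊂ ℝ^N be a closed set, and let f be a positive, twice continuously differentiable real-valued function on the open set ℝ^N \ Σ. Assume there are constants c₁, c₂ > 0 such that for all x ∈ ℝ^N \ Σ: ‖∇f(x)‖ ≤ c₁ f(x) and ‖Hess f(x)‖ ≤ c₂ · min(1, dist(x, Σ))^{−1} · f(x), where Hess f(x) is the second (Fréchet) derivative of f at x with its operator norm. Then there exist constants A₁, A₂ > 0 such that for all x ∈ ℝ^N \ Σ and all v ∈ ℝ^N, ‖2 · Hess(−log f)(x) v‖ ≤ (A₁ + A₂ dist(x, Σ)^{−1}) ‖v‖, where 2 · Hess(−log f) is the Bakry–Emery Ricci tensor of the weighted space with weight Φ = −log f. -/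
set_option maxHeartbeats 1000000

open Metric Real

noncomputable def Ldual (N : ℕ) :
    (EuclideanSpace ℝ (Fin N) →L[ℝ] ℝ) →L[ℝ] EuclideanSpace ℝ (Fin N) :=
  { toFun := fun φ => (InnerProductSpace.toDual ℝ (EuclideanSpace ℝ (Fin N))).symm φ
    map_add' := fun φ ψ => by simp
    map_smul' := fun r φ => by simp [LinearIsometryEquiv.map_smulₛₗ]
    cont := (InnerProductSpace.toDual ℝ (EuclideanSpace ℝ (Fin N))).symm.continuous }

theorem Ldual_norm {N : ℕ} (φ : EuclideanSpace ℝ (Fin N) →L[ℝ] ℝ) : ‖Ldual N φ‖ = ‖φ‖ :=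
  (InnerProductSpace.toDual ℝ _).symm.norm_map φ

theorem gradient_eq_Ldual {N : ℕ} (g : EuclideanSpace ℝ (Fin N) → ℝ)
    (x : EuclideanSpace ℝ (Fin N)) : gradient g x = Ldual N (fderiv ℝ g x) := rfl

theorem min_inv_le {d : ℝ} (hd : 0 ≤ d) : (min 1 d)⁻¹ ≤ 1 + d⁻¹ := by
  rcases le_total 1 d with h | h
  · rw [min_eq_left h]
    simp [inv_nonneg.2 hd]
  · rw [min_eq_right h]
    have : (0:ℝ) ≤ d⁻¹ := inv_nonneg.2 hd
    linarith


/-- Let `Σ ⊂ ℝ^N` be closed and let `f` be positive and `C²` on `ℝ^N \ Σ` with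
`‖∇f‖ ≤ c₁ f` and `‖Hess f‖ ≤ c₂ min(1, dist(·,Σ))⁻¹ f` there. Then the Bakry–Émery
Ricci tensor `Ric_Φ = 2 Hess Φ` of the weight `Φ = -log f` satisfies
`‖Ric_Φ(x) v‖ ≤ (A₁ + A₂ dist(x,Σ)⁻¹) ‖v‖` off `Σ`, for some constants `A₁, A₂ > 0`. -/
theorem bakryEmery_ricci_bound {N : ℕ} (S : Set (EuclideanSpace ℝ (Fin N)))
    (hS : IsClosed S) (f : EuclideanSpace ℝ (Fin N) → ℝ)
    (hf_pos : ∀ x ∉ S, 0 < f x) (hf : ContDiffOn ℝ 2 f Sᶜ)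
    (c₁ c₂ : ℝ) (hc₁ : 0 < c₁) (hc₂ : 0 < c₂)
    (hgrad : ∀ x ∉ S, ‖gradient f x‖ ≤ c₁ * f x)
    (hhess : ∀ x ∉ S,
      ‖iteratedFDeriv ℝ 2 f x‖ ≤ c₂ * (min 1 (Metric.infDist x S))⁻¹ * f x) :
    ∃ A₁ A₂ : ℝ, 0 < A₁ ∧ 0 < A₂ ∧
      ∀ x ∉ S, ∀ v : EuclideanSpace ℝ (Fin N),
        ‖(2 : ℝ) • fderiv ℝ (gradient (fun y => -Real.log (f y))) x v‖ ≤
          (A₁ + A₂ * (Metric.infDist x S)⁻¹) * ‖v‖ := by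
  refine ⟨2 * c₁ ^ 2 + 2 * c₂, 2 * c₂, by positivity, by positivity, fun x hx v => ?_⟩
  set g : EuclideanSpace ℝ (Fin N) → ℝ := fun y => -Real.log (f y) with hg
  have hopen : IsOpen Sᶜ := hS.isOpen_compl
  have hmem : Sᶜ ∈ nhds x := hopen.mem_nhds hx
  have hfx2 : ContDiffAt ℝ 2 f x := hf.contDiffAt hmem
  have hf1 : DifferentiableAt ℝ f x := hfx2.differentiableAt (by norm_num)
  have hD2 : DifferentiableAt ℝ (fderiv ℝ f) x :=
    (hfx2.fderiv_right (m := 1) (by norm_num)).differentiableAt (by norm_num)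
  have hfxpos : 0 < f x := hf_pos x hx
  have hfxne : f x ≠ 0 := ne_of_gt hfxpos
  -- gradient of g on Sᶜ
  have grad_eq : ∀ y ∈ Sᶜ, gradient g y = (-(f y)⁻¹) • gradient f y := by
    intro y hy
    have hfy : DifferentiableAt ℝ f y :=
      (hf.contDiffAt (hopen.mem_nhds hy)).differentiableAt (by norm_num)
    have hfyne : f y ≠ 0 := ne_of_gt (hf_pos y hy)
    have hg' : HasFDerivAt g (-((f y)⁻¹ • fderiv ℝ f y)) y :=
      (hfy.hasFDerivAt.log hfyne).neg
    rw [gradient_eq_Ldual, hg'.fderiv, map_neg, map_smul, ← gradient_eq_Ldual, ← neg_smul]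
  have heq : gradient g =ᶠ[nhds x] fun y => (-(f y)⁻¹) • gradient f y :=
    Filter.eventuallyEq_of_mem hmem grad_eq
  -- derivative of the RHS
  set D2 : EuclideanSpace ℝ (Fin N) →L[ℝ] (EuclideanSpace ℝ (Fin N) →L[ℝ] ℝ) :=
    fderiv ℝ (fderiv ℝ f) x with hD2def
  have hGf : HasFDerivAt (gradient f) ((Ldual N).comp D2) x :=
    (Ldual N).hasFDerivAt.comp x hD2.hasFDerivAt
  have hcinv : HasFDerivAt (fun y => -(f y)⁻¹) (((f x) ^ 2)⁻¹ • fderiv ℝ f x) x := by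
    have h1 : HasFDerivAt (fun y => (f y)⁻¹) ((-((f x) ^ 2)⁻¹) • fderiv ℝ f x) x :=
      (hasDerivAt_inv hfxne).comp_hasFDerivAt x hf1.hasFDerivAt
    have h2 := h1.neg
    rw [neg_smul, neg_neg] at h2
    exact h2
  have hsmul := hcinv.smul hGf
  have hfd : fderiv ℝ (gradient g) x =
      (-(f x)⁻¹) • (Ldual N).comp D2 +
        (((f x) ^ 2)⁻¹ • fderiv ℝ f x).smulRight (gradient f x) := by
    rw [heq.fderiv_eq]; exact hsmul.fderiv
  -- bound
  have hval : fderiv ℝ (gradient g) x v =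
      (-(f x)⁻¹) • Ldual N (D2 v) +
        (((f x) ^ 2)⁻¹ * fderiv ℝ f x v) • gradient f x := by
    rw [hfd]; simp [ContinuousLinearMap.smulRight_apply, smul_smul]
  have hd0 : 0 ≤ Metric.infDist x S := Metric.infDist_nonneg
  have hm0 : (0:ℝ) ≤ (min 1 (Metric.infDist x S))⁻¹ := by positivity
  have hH := hhess x hx
  have hG := hgrad x hx
  -- ‖D2 v‖ ≤ ‖itF‖ ‖v‖
  have hD2v : ‖D2 v‖ ≤ ‖iteratedFDeriv ℝ 2 f x‖ * ‖v‖ := by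
    refine ContinuousLinearMap.opNorm_le_bound _ (by positivity) fun w => ?_
    have := (iteratedFDeriv_two_apply (𝕜 := ℝ) f x ![v, w]).symm
    simp only [Matrix.cons_val_zero, Matrix.cons_val_one, Matrix.head_cons] at this
    rw [← hD2def] at this
    rw [this]
    calc ‖iteratedFDeriv ℝ 2 f x ![v, w]‖
        ≤ ‖iteratedFDeriv ℝ 2 f x‖ * ∏ i, ‖(![v, w]) i‖ :=
          (iteratedFDeriv ℝ 2 f x).le_opNorm _
      _ = ‖iteratedFDeriv ℝ 2 f x‖ * (‖v‖ * ‖w‖) := by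
          rw [Fin.prod_univ_two]; simp
      _ = ‖iteratedFDeriv ℝ 2 f x‖ * ‖v‖ * ‖w‖ := by ring
  have hfdnorm : ‖fderiv ℝ f x‖ = ‖gradient f x‖ := by
    rw [gradient_eq_Ldual, Ldual_norm]
  have hfv : |fderiv ℝ f x v| ≤ c₁ * f x * ‖v‖ := by
    calc |fderiv ℝ f x v| ≤ ‖fderiv ℝ f x‖ * ‖v‖ := (fderiv ℝ f x).le_opNorm v
      _ = ‖gradient f x‖ * ‖v‖ := by rw [hfdnorm]
      _ ≤ c₁ * f x * ‖v‖ := by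
          exact mul_le_mul_of_nonneg_right hG (norm_nonneg v)
  have hbound : ‖fderiv ℝ (gradient g) x v‖ ≤
      (c₂ * (min 1 (Metric.infDist x S))⁻¹ + c₁ ^ 2) * ‖v‖ := by
    rw [hval]
    refine (norm_add_le _ _).trans ?_
    have hA : ‖(-(f x)⁻¹) • Ldual N (D2 v)‖ ≤
        c₂ * (min 1 (Metric.infDist x S))⁻¹ * ‖v‖ := by
      rw [norm_smul, Ldual_norm]
      have : ‖(-(f x)⁻¹ : ℝ)‖ = (f x)⁻¹ := by
        rw [norm_neg, Real.norm_eq_abs, abs_of_pos (inv_pos.2 hfxpos)]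
      rw [this]
      calc (f x)⁻¹ * ‖D2 v‖ ≤ (f x)⁻¹ * (‖iteratedFDeriv ℝ 2 f x‖ * ‖v‖) :=
            mul_le_mul_of_nonneg_left hD2v (by positivity)
        _ ≤ (f x)⁻¹ * ((c₂ * (min 1 (Metric.infDist x S))⁻¹ * f x) * ‖v‖) := by
            refine mul_le_mul_of_nonneg_left ?_ (by positivity)
            exact mul_le_mul_of_nonneg_right hH (norm_nonneg v)
        _ = c₂ * (min 1 (Metric.infDist x S))⁻¹ * ‖v‖ := by
            linear_combination (c₂ * (min 1 (Metric.infDist x S))⁻¹ * ‖v‖) * inv_mul_cancel₀ hfxne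
    have hB : ‖(((f x) ^ 2)⁻¹ * fderiv ℝ f x v) • gradient f x‖ ≤ c₁ ^ 2 * ‖v‖ := by
      rw [norm_smul, Real.norm_eq_abs, abs_mul, abs_of_pos (inv_pos.2 (by positivity : (0:ℝ) < (f x)^2))]
      calc ((f x) ^ 2)⁻¹ * |fderiv ℝ f x v| * ‖gradient f x‖
          ≤ ((f x) ^ 2)⁻¹ * (c₁ * f x * ‖v‖) * (c₁ * f x) := by
            refine mul_le_mul ?_ hG (norm_nonneg _) (by positivity)
            exact mul_le_mul_of_nonneg_left hfv (by positivity)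
        _ = c₁ ^ 2 * ‖v‖ := by
            linear_combination (c₁ ^ 2 * ‖v‖) * inv_mul_cancel₀ (pow_ne_zero 2 hfxne)
    linarith
  -- conclude
  have hmin := min_inv_le hd0
  calc ‖(2:ℝ) • fderiv ℝ (gradient g) x v‖
      = 2 * ‖fderiv ℝ (gradient g) x v‖ := by
        rw [norm_smul]; norm_num
    _ ≤ 2 * ((c₂ * (min 1 (Metric.infDist x S))⁻¹ + c₁ ^ 2) * ‖v‖) := by
        nlinarith [norm_nonneg (fderiv ℝ (gradient g) x v)]
    _ ≤ (2 * c₁ ^ 2 + 2 * c₂ + 2 * c₂ * (Metric.infDist x S)⁻¹) * ‖v‖ := by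
        have hv0 : (0:ℝ) ≤ ‖v‖ := norm_nonneg v
        nlinarith [mul_nonneg (mul_nonneg hc₂.le (sub_nonneg.2 hmin)) hv0]
end
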